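/- arXiv:2405.12660 — 2 statements merged into one kernel-verified Lean document; each statement's English description precedes it below -/
import Mathlib

section
/- Let U be a finite set and let 𝒯 be a family of subsets of U such that: ∅ ∈ 𝒯; 𝒯 is closed under pairwise intersections; for all distinct x, y ∈ U there exists K ∈ 𝒯 with |{x, y} ∩ K| = 1; for all K₁, K₂, K₃, M₁, M₂, M₃ ∈ 𝒯 with K_i ∪ K_j ⊆ M_k for every permutation {i, j, k} = {1, 2, 3}, one has K₁ ∪ K₂ ∪ K₃ ∈ 𝒯 (i.e., 𝒯 is a median set system); and the 1-inclusion graph of 𝒯 (the graph with vertex set 𝒯 in which S and T are adjacent if and only if |S △ T| = 1) is a tree, i.e., connected and acyclic. Then 𝒯 is realizable in ℝ². -/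
open Finset

section AuxLemmas

universe u

/-- If a predicate holds at the start of a walk but not at the end, some edge of the
walk flips it. -/
lemma walk_flip_aux {V : Type u} {G : SimpleGraph V} (p : V → Prop) :
    ∀ {x y : V} (w : G.Walk x y), p x → ¬p y →
      ∃ u v, G.Adj u v ∧ p u ∧ ¬p v ∧ u ∈ w.support ∧ v ∈ w.support := by
  intro x y w
  induction w with
  | nil => intro h h'; exact absurd h h'
  | @cons x b y hadj w ih =>
    intro hx hy
    by_cases hb : p b
    · obtain ⟨u, v, h1, h2, h3, h4, h5⟩ := ih hb hy
      exact ⟨u, v, h1, h2, h3,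
        by rw [SimpleGraph.Walk.support_cons]; exact List.mem_cons_of_mem _ h4,
        by rw [SimpleGraph.Walk.support_cons]; exact List.mem_cons_of_mem _ h5⟩
    · exact ⟨x, b, hadj, hx, hb, SimpleGraph.Walk.start_mem_support _, by
        rw [SimpleGraph.Walk.support_cons]
        exact List.mem_cons_of_mem _ w.start_mem_support⟩

end AuxLemmas

section AuxLemmas2

lemma finset_inf_mem {α : Type*} [DecidableEq α] [Fintype α] (𝒯 : Set (Finset α))
    (hinter : ∀ X ∈ 𝒯, ∀ Y ∈ 𝒯, X ∩ Y ∈ 𝒯) (s : Finset ℕ) (g : ℕ → Finset α) :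
    s.Nonempty → (∀ i ∈ s, g i ∈ 𝒯) → s.inf g ∈ 𝒯 := by
  induction s using Finset.cons_induction with
  | empty => intro h; simp at h
  | cons a s ha ih =>
    intro _ hg
    rw [Finset.inf_cons]
    rcases s.eq_empty_or_nonempty with rfl | hs
    · simpa using hg a (by simp)
    · have h1 := hg a (by simp)
      have h2 := ih hs (fun i hi => hg i (by simp [hi]))
      have : g a ⊓ s.inf g = g a ∩ s.inf g := rfl
      rw [this]
      exact hinter _ h1 _ h2

end AuxLemmas2

universe u in
/-- Laminar families admit an interval-compatible ordering. -/
lemma laminar_interval_order (k : ℕ) :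
    ∀ (V : Type u) [Fintype V] (F : Finset (Set V)), F.card ≤ k →
    (∀ A ∈ F, A.Nonempty) →
    (∀ A ∈ F, ∀ B ∈ F, A ⊆ B ∨ B ⊆ A ∨ Disjoint A B) →
    ∃ σ : Fin (Fintype.card V) ≃ V, ∀ A ∈ F, ∃ a b : ℕ,
      ∀ i : Fin (Fintype.card V), σ i ∈ A ↔ a ≤ i.1 ∧ i.1 < b := by
  induction k with
  | zero =>
    intro V _ F hF _ _
    refine ⟨(Fintype.equivFin V).symm, ?_⟩
    intro A hA
    simp only [Nat.le_zero, Finset.card_eq_zero] at hF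
    subst hF; simp at hA
  | succ k ih =>
    intro V _ F hF hne hlam
    classical
    rcases F.eq_empty_or_nonempty with rfl | hFne
    · refine ⟨(Fintype.equivFin V).symm, ?_⟩; intro A hA; simp at hA
    -- pick a maximal element M
    obtain ⟨M, hM, hMmax⟩ := F.exists_max_image (fun A => A.ncard) hFne
    have hMne : M.Nonempty := hne M hM
    have hmaxM : ∀ A ∈ F, M ⊆ A → A = M := by
      intro A hA hMA
      exact (Set.eq_of_subset_of_ncard_le hMA (hMmax A hA) (Set.toFinite A)).symm
    -- subfamilies
    set F₁ : Finset (Set ↥M) :=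
      ((F.erase M).filter (· ⊆ M)).image (fun A => (Subtype.val ⁻¹' A : Set ↥M)) with hF₁
    set F₂ : Finset (Set ↥(Mᶜ)) :=
      ((F.erase M).filter (fun A => Disjoint A M)).image
        (fun A => (Subtype.val ⁻¹' A : Set ↥(Mᶜ))) with hF₂
    have hcard₁ : F₁.card ≤ k := by
      calc F₁.card ≤ ((F.erase M).filter (· ⊆ M)).card := Finset.card_image_le
        _ ≤ (F.erase M).card := Finset.card_filter_le _ _
        _ ≤ k := by
            have := Finset.card_erase_of_mem hM
            omega
    have hcard₂ : F₂.card ≤ k := by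
      calc F₂.card ≤ ((F.erase M).filter (fun A => Disjoint A M)).card :=
            Finset.card_image_le
        _ ≤ (F.erase M).card := Finset.card_filter_le _ _
        _ ≤ k := by
            have := Finset.card_erase_of_mem hM
            omega
    obtain ⟨σ₁, hσ₁⟩ := ih ↥M F₁ hcard₁
      (by
        intro A hA
        simp only [hF₁, Finset.mem_image, Finset.mem_filter, Finset.mem_erase] at hA
        obtain ⟨B, ⟨⟨hBne', hBF⟩, hBM⟩, rfl⟩ := hA
        obtain ⟨x, hx⟩ := hne B hBF
        exact ⟨⟨x, hBM hx⟩, hx⟩)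
      (by
        intro A hA B hB
        simp only [hF₁, Finset.mem_image, Finset.mem_filter, Finset.mem_erase] at hA hB
        obtain ⟨A', ⟨⟨_, hAF⟩, _⟩, rfl⟩ := hA
        obtain ⟨B', ⟨⟨_, hBF⟩, _⟩, rfl⟩ := hB
        rcases hlam A' hAF B' hBF with h | h | h
        · exact Or.inl (Set.preimage_mono h)
        · exact Or.inr (Or.inl (Set.preimage_mono h))
        · exact Or.inr (Or.inr (Disjoint.preimage _ h)))
    obtain ⟨σ₂, hσ₂⟩ := ih ↥(Mᶜ) F₂ hcard₂
      (by
        intro A hA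
        simp only [hF₂, Finset.mem_image, Finset.mem_filter, Finset.mem_erase] at hA
        obtain ⟨B, ⟨⟨hBne', hBF⟩, hBM⟩, rfl⟩ := hA
        obtain ⟨x, hx⟩ := hne B hBF
        exact ⟨⟨x, fun hxM => Set.disjoint_left.1 hBM hx hxM⟩, hx⟩)
      (by
        intro A hA B hB
        simp only [hF₂, Finset.mem_image, Finset.mem_filter, Finset.mem_erase] at hA hB
        obtain ⟨A', ⟨⟨_, hAF⟩, _⟩, rfl⟩ := hA
        obtain ⟨B', ⟨⟨_, hBF⟩, _⟩, rfl⟩ := hB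
        rcases hlam A' hAF B' hBF with h | h | h
        · exact Or.inl (Set.preimage_mono h)
        · exact Or.inr (Or.inl (Set.preimage_mono h))
        · exact Or.inr (Or.inr (Disjoint.preimage _ h)))
    have hc : Fintype.card V = Fintype.card ↥M + Fintype.card ↥(Mᶜ) := by
      rw [← Fintype.card_sum]
      exact Fintype.card_congr (Equiv.Set.sumCompl M).symm
    set σ : Fin (Fintype.card V) ≃ V :=
      (finCongr hc).trans ((finSumFinEquiv.symm).trans
        ((σ₁.sumCongr σ₂).trans (Equiv.Set.sumCompl M))) with hσdef
    have hσl : ∀ (i : Fin (Fintype.card V)) (h : i.1 < Fintype.card ↥M),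
        σ i = (σ₁ ⟨i.1, h⟩ : ↥M).1 := by
      intro i h
      have hstep : finSumFinEquiv.symm (finCongr hc i) = Sum.inl ⟨i.1, h⟩ := by
        rw [Equiv.symm_apply_eq, finSumFinEquiv_apply_left]
        ext; simp
      calc σ i = (Equiv.Set.sumCompl M)
            ((σ₁.sumCongr σ₂) (finSumFinEquiv.symm (finCongr hc i))) := rfl
        _ = _ := by rw [hstep]; simp
    have hσr : ∀ (i : Fin (Fintype.card V)) (h : Fintype.card ↥M ≤ i.1),
        σ i = (σ₂ ⟨i.1 - Fintype.card ↥M, by have := i.2; omega⟩ : ↥(Mᶜ)).1 := by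
      intro i h
      have hi : i.1 - Fintype.card ↥M < Fintype.card ↥(Mᶜ) := by have := i.2; omega
      have hstep : finSumFinEquiv.symm (finCongr hc i) =
          Sum.inr ⟨i.1 - Fintype.card ↥M, hi⟩ := by
        rw [Equiv.symm_apply_eq, finSumFinEquiv_apply_right]
        ext
        simp only [finCongr_apply, Fin.coe_natAdd, Fin.coe_cast]
        omega
      calc σ i = (Equiv.Set.sumCompl M)
            ((σ₁.sumCongr σ₂) (finSumFinEquiv.symm (finCongr hc i))) := rfl
        _ = _ := by rw [hstep]; simp
    have hmemM : ∀ (i : Fin (Fintype.card V)), σ i ∈ M ↔ i.1 < Fintype.card ↥M := by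
      intro i
      by_cases h : i.1 < Fintype.card ↥M
      · simp only [h, iff_true, hσl i h]; exact (σ₁ ⟨i.1, h⟩).2
      · push_neg at h
        rw [hσr i h]
        have := (σ₂ ⟨i.1 - Fintype.card ↥M, by have := i.2; omega⟩).2
        simp only [Set.mem_compl_iff] at this
        simp only [this, false_iff]
        omega
    refine ⟨σ, ?_⟩
    intro A hA
    by_cases hAM : A = M
    · exact ⟨0, Fintype.card ↥M, fun i => by rw [hAM]; simpa using hmemM i⟩
    have hAe : A ∈ F.erase M := Finset.mem_erase.2 ⟨hAM, hA⟩
    rcases hlam A hA M hM with hsub | hsub | hdis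
    · -- A ⊆ M : use σ₁ interval
      obtain ⟨a, b, hab⟩ := hσ₁ (Subtype.val ⁻¹' A)
        (Finset.mem_image.2 ⟨A, Finset.mem_filter.2 ⟨hAe, hsub⟩, rfl⟩)
      refine ⟨a, min b (Fintype.card ↥M), fun i => ?_⟩
      by_cases h : i.1 < Fintype.card ↥M
      · rw [hσl i h]
        have := hab ⟨i.1, h⟩
        simp only [Set.mem_preimage] at this
        rw [this]
        omega
      · push_neg at h
        exact iff_of_false
          (fun hmem => by have := (hmemM i).1 (hsub hmem); omega)
          (by omega)
    · have := hmaxM A hA hsub; exact absurd this hAM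
    · -- A disjoint from M : use σ₂ interval
      obtain ⟨a, b, hab⟩ := hσ₂ (Subtype.val ⁻¹' A)
        (Finset.mem_image.2 ⟨A, Finset.mem_filter.2 ⟨hAe, hdis⟩, rfl⟩)
      refine ⟨Fintype.card ↥M + a, Fintype.card ↥M + b, fun i => ?_⟩
      by_cases h : i.1 < Fintype.card ↥M
      · exact iff_of_false
          (fun hmem => Set.disjoint_left.1 hdis hmem ((hmemM i).2 h))
          (by omega)
      · push_neg at h
        rw [hσr i h]
        have := hab ⟨i.1 - Fintype.card ↥M, by have := i.2; omega⟩
        simp only [Set.mem_preimage] at this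
        rw [this]
        omega


/-- Realizability of a set family in `ℝ^d` by an arrangement of affine hyperplanes
restricted to an open convex set. -/
def IsRealizable {α : Type*} [Fintype α] (𝒮 : Set (Finset α)) (d : ℕ) : Prop :=
  ∃ (a : α → Fin d → ℝ) (b : α → ℝ) (K : Set (Fin d → ℝ)),
    IsOpen K ∧ Convex ℝ K ∧
      ∀ X : Finset α, X ∈ 𝒮 ↔ ∃ x ∈ K,
        (∀ e ∈ X, 0 < (∑ i, a e i * x i) + b e) ∧
        ∀ e ∉ X, (∑ i, a e i * x i) + b e < 0

set_option maxHeartbeats 1000000 in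
/-- A median set system whose 1-inclusion graph (two members adjacent iff their
symmetric difference is a singleton) is a tree is realizable in `ℝ²`. -/
theorem tree_median_set_system_realizable_in_plane
    {α : Type*} [Fintype α] [DecidableEq α] (𝒯 : Set (Finset α))
    (h0 : (∅ : Finset α) ∈ 𝒯)
    (hinter : ∀ X ∈ 𝒯, ∀ Y ∈ 𝒯, X ∩ Y ∈ 𝒯)
    (hsep : ∀ x y : α, x ≠ y → ∃ K ∈ 𝒯, (({x, y} : Finset α) ∩ K).card = 1)
    (hmed : ∀ K₁ ∈ 𝒯, ∀ K₂ ∈ 𝒯, ∀ K₃ ∈ 𝒯, ∀ M₁ ∈ 𝒯, ∀ M₂ ∈ 𝒯, ∀ M₃ ∈ 𝒯,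
      K₁ ∪ K₂ ⊆ M₃ → K₁ ∪ K₃ ⊆ M₂ → K₂ ∪ K₃ ⊆ M₁ → K₁ ∪ K₂ ∪ K₃ ∈ 𝒯)
    (htree : (SimpleGraph.fromRel
      (fun S T : {X : Finset α // X ∈ 𝒯} => (symmDiff S.val T.val).card = 1)).IsTree) :
    IsRealizable 𝒯 2 := by
  classical
  set V := {X : Finset α // X ∈ 𝒯} with hVdef
  set G := SimpleGraph.fromRel
      (fun S T : V => (symmDiff S.val T.val).card = 1) with hGdef
  -- median closure
  have medmem : ∀ A ∈ 𝒯, ∀ Z ∈ 𝒯, ∀ Y ∈ 𝒯,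
      (A ∩ Z) ∪ (A ∩ Y) ∪ (Z ∩ Y) ∈ 𝒯 := by
    intro A hA Z hZ Y hY
    refine hmed (A ∩ Z) (hinter _ hA _ hZ) (A ∩ Y) (hinter _ hA _ hY)
      (Z ∩ Y) (hinter _ hZ _ hY) Y hY Z hZ A hA ?_ ?_ ?_
    · exact Finset.union_subset (Finset.inter_subset_left) (Finset.inter_subset_left)
    · exact Finset.union_subset (Finset.inter_subset_right) (Finset.inter_subset_left)
    · exact Finset.union_subset (Finset.inter_subset_right) (Finset.inter_subset_right)
  -- adjacency characterization
  have hadj : ∀ S T : V, G.Adj S T ↔ (symmDiff S.1 T.1).card = 1 := by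
    intro S T
    rw [hGdef, SimpleGraph.fromRel_adj]
    constructor
    · rintro ⟨hne, h | h⟩
      · exact h
      · rwa [symmDiff_comm]
    · intro h
      refine ⟨?_, Or.inl h⟩
      rintro rfl
      rw [symmDiff_self] at h
      simp at h
  -- projection walks
  have proj : ∀ (X Y : V), ∃ w : G.Walk X Y,
      ∀ Z ∈ w.support, X.1 ∩ Y.1 ⊆ Z.1 ∧ Z.1 ⊆ X.1 ∪ Y.1 := by
    intro X Y
    let P : V → V := fun Z =>
      ⟨(X.1 ∩ Z.1) ∪ (X.1 ∩ Y.1) ∪ (Z.1 ∩ Y.1), medmem _ X.2 _ Z.2 _ Y.2⟩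
    have hPbound : ∀ Z : V, X.1 ∩ Y.1 ⊆ (P Z).1 ∧ (P Z).1 ⊆ X.1 ∪ Y.1 := by
      intro Z
      constructor
      · intro x hx
        simp only [P, Finset.mem_union]
        exact Or.inl (Or.inr hx)
      · intro x hx
        simp only [P, Finset.mem_union, Finset.mem_inter] at hx ⊢
        tauto
    have hPadj : ∀ Z Z' : V, G.Adj Z Z' → P Z = P Z' ∨ G.Adj (P Z) (P Z') := by
      intro Z Z' hZZ
      rw [hadj] at hZZ
      have hsub : symmDiff (P Z).1 (P Z').1 ⊆ symmDiff Z.1 Z'.1 := by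
        intro x hx
        simp only [P, Finset.mem_symmDiff, Finset.mem_union, Finset.mem_inter] at hx ⊢
        tauto
      have hle : (symmDiff (P Z).1 (P Z').1).card ≤ 1 := by
        rw [← hZZ]
        exact Finset.card_le_card hsub
      rcases Nat.lt_or_ge (symmDiff (P Z).1 (P Z').1).card 1 with h | h
      · left
        have : symmDiff (P Z).1 (P Z').1 = ∅ := by
          have := Nat.lt_one_iff.1 h
          exact Finset.card_eq_zero.1 this
        have := symmDiff_eq_bot.1 this
        exact Subtype.ext this
      · right
        rw [hadj]
        omega
    have key : ∀ (A B : V), G.Walk A B → ∃ w : G.Walk (P A) (P B),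
        ∀ Z ∈ w.support, ∃ W, Z = P W := by
      intro A B w
      induction w with
      | nil => exact ⟨SimpleGraph.Walk.nil, by intro Z hZ; simp at hZ; exact ⟨_, hZ⟩⟩
      | @cons A A₁ B hadj' w ih =>
        obtain ⟨w', hw'⟩ := ih
        rcases hPadj _ _ hadj' with heq | hadj2
        · refine ⟨w'.copy heq.symm rfl, ?_⟩
          intro Z hZ
          rw [SimpleGraph.Walk.support_copy] at hZ
          exact hw' Z hZ
        · refine ⟨SimpleGraph.Walk.cons hadj2 w', ?_⟩
          intro Z hZ
          rw [SimpleGraph.Walk.support_cons] at hZ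
          rcases List.mem_cons.1 hZ with rfl | hZ
          · exact ⟨A, rfl⟩
          · exact hw' Z hZ
    have hPX : P X = X := by
      apply Subtype.ext
      simp only [P]
      ext x
      simp only [Finset.mem_union, Finset.mem_inter]
      tauto
    have hPY : P Y = Y := by
      apply Subtype.ext
      simp only [P]
      ext x
      simp only [Finset.mem_union, Finset.mem_inter]
      tauto
    obtain ⟨w₀⟩ := htree.isConnected.preconnected X Y
    obtain ⟨w, hw⟩ := key X Y w₀
    refine ⟨w.copy hPX hPY, ?_⟩
    intro Z hZ
    rw [SimpleGraph.Walk.support_copy] at hZ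
    obtain ⟨W, rfl⟩ := hw Z hZ
    exact hPbound W
  -- convex connectivity with respect to a single element
  have cpath_in : ∀ (e : α) (u v : V), e ∈ u.1 → e ∈ v.1 →
      ∃ w : G.Walk u v, w.IsPath ∧ ∀ Z ∈ w.support, e ∈ Z.1 := by
    intro e u v hu hv
    obtain ⟨w, hw⟩ := proj u v
    refine ⟨w.bypass, w.bypass_isPath, ?_⟩
    intro Z hZ
    exact (hw Z (w.support_bypass_subset hZ)).1 (Finset.mem_inter.2 ⟨hu, hv⟩)
  have cpath_out : ∀ (e : α) (u v : V), e ∉ u.1 → e ∉ v.1 →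
      ∃ w : G.Walk u v, w.IsPath ∧ ∀ Z ∈ w.support, e ∉ Z.1 := by
    intro e u v hu hv
    obtain ⟨w, hw⟩ := proj u v
    refine ⟨w.bypass, w.bypass_isPath, ?_⟩
    intro Z hZ hmem
    have := (hw Z (w.support_bypass_subset hZ)).2 hmem
    rw [Finset.mem_union] at this
    tauto
  -- crossing is impossible
  have crossfree : ∀ (e f : α) (W Pv Q : V), e ∈ W.1 → f ∈ W.1 → e ∈ Pv.1 → f ∉ Pv.1 →
      e ∉ Q.1 → f ∈ Q.1 → False := by
    intro e f W Pv Q hWe hWf hPe hPf hQe hQf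
    set R : V := ⟨∅, h0⟩ with hRdef
    have hRe : e ∉ R.1 := by simp [hRdef]
    have hRf : f ∉ R.1 := by simp [hRdef]
    -- a walk from W to Pv all of whose vertices contain e; f flips on it
    obtain ⟨w₁, _, hw₁⟩ := cpath_in e W Pv hWe hPe
    obtain ⟨u₁, v₁, hadj₁, hfu₁, hfv₁, hu₁s, hv₁s⟩ :=
      walk_flip_aux (fun z : V => f ∈ z.1) w₁ hWf hPf
    have heu₁ : e ∈ u₁.1 := hw₁ _ hu₁s
    have hev₁ : e ∈ v₁.1 := hw₁ _ hv₁s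
    -- a walk from Q to R avoiding e; f flips on it
    obtain ⟨w₂, _, hw₂⟩ := cpath_out e Q R hQe hRe
    obtain ⟨u₂, v₂, hadj₂, hfu₂, hfv₂, hu₂s, hv₂s⟩ :=
      walk_flip_aux (fun z : V => f ∈ z.1) w₂ hQf hRf
    have heu₂ : e ∉ u₂.1 := hw₂ _ hu₂s
    have hev₂ : e ∉ v₂.1 := hw₂ _ hv₂s
    -- paths inside/outside f
    obtain ⟨p₁, hp₁path, hp₁⟩ := cpath_in f u₁ u₂ hfu₁ hfu₂
    obtain ⟨p₂, hp₂path, hp₂⟩ := cpath_out f v₁ v₂ hfv₁ hfv₂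
    have hne12 : u₁ ≠ u₂ := fun h => heu₂ (h ▸ heu₁)
    obtain ⟨x₂, hadjx, q, rfl⟩ := SimpleGraph.Walk.exists_eq_cons_of_ne hne12 p₁
    have hfx₂ : f ∈ x₂.1 := by
      apply hp₁
      rw [SimpleGraph.Walk.support_cons]
      exact List.mem_cons_of_mem _ q.start_mem_support
    -- two paths from u₁ to v₂
    have hwa : (SimpleGraph.Walk.cons hadj₁ p₂).IsPath := by
      refine hp₂path.cons ?_
      intro hmem
      exact hp₂ _ hmem hfu₁
    have hwb : ((SimpleGraph.Walk.cons hadjx q).concat hadj₂).IsPath := by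
      rw [SimpleGraph.Walk.isPath_def, SimpleGraph.Walk.support_concat]
      refine List.Nodup.append ((SimpleGraph.Walk.isPath_def _).1 hp₁path) (by simp) ?_
      intro a ha ha'
      simp only [List.mem_singleton] at ha'
      subst ha'
      exact hfv₂ (hp₁ _ ha)
    rw [SimpleGraph.Walk.concat_cons] at hwb
    have hPeq := htree.IsAcyclic.path_unique
      ⟨SimpleGraph.Walk.cons hadj₁ p₂, hwa⟩
      ⟨SimpleGraph.Walk.cons hadjx (q.concat hadj₂), hwb⟩
    have hweq : SimpleGraph.Walk.cons hadj₁ p₂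
        = SimpleGraph.Walk.cons hadjx (q.concat hadj₂) := congrArg Subtype.val hPeq
    have hsup := congrArg SimpleGraph.Walk.support hweq
    rw [SimpleGraph.Walk.support_cons, SimpleGraph.Walk.support_cons,
      SimpleGraph.Walk.support_eq_cons p₂, SimpleGraph.Walk.support_eq_cons (q.concat hadj₂)]
      at hsup
    have : v₁ = x₂ := by
      injection hsup with _ h2
      injection h2 with h3 _
    exact hfv₁ (this ▸ hfx₂)
  -- laminarity of the element cuts
  have laminar : ∀ e f : α, {v : V | e ∈ v.1} ⊆ {v : V | f ∈ v.1} ∨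
      {v : V | f ∈ v.1} ⊆ {v : V | e ∈ v.1} ∨
      Disjoint {v : V | e ∈ v.1} {v : V | f ∈ v.1} := by
    intro e f
    by_contra hcon
    push_neg at hcon
    obtain ⟨h1, h2, h3⟩ := hcon
    rw [Set.not_subset] at h1 h2
    obtain ⟨Pv, hPe, hPf⟩ := h1
    obtain ⟨Q, hQf, hQe⟩ := h2
    rw [Set.not_disjoint_iff] at h3
    obtain ⟨W, hWe, hWf⟩ := h3
    exact crossfree e f W Pv Q hWe hWf hPe hPf hQe hQf
  -- apply the laminar interval order
  set n := Fintype.card V with hndef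
  set F : Finset (Set V) :=
    (Finset.univ.image (fun e : α => {v : V | e ∈ v.1})).filter
      (fun A => A.Nonempty) with hFdef
  obtain ⟨σ, hσ⟩ := laminar_interval_order F.card V F le_rfl
    (by intro A hA; exact (Finset.mem_filter.1 hA).2)
    (by
      intro A hA B hB
      obtain ⟨e, _, rfl⟩ := Finset.mem_image.1 (Finset.mem_filter.1 hA).1
      obtain ⟨f, _, rfl⟩ := Finset.mem_image.1 (Finset.mem_filter.1 hB).1
      exact laminar e f)
  -- normalized interval data
  have hchoice : ∀ e : α, ∃ a b : ℕ,
      (∀ i : Fin n, e ∈ (σ i).1 ↔ a ≤ i.1 ∧ i.1 < b) ∧ b ≤ n ∧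
        (a < b ∨ (a = 0 ∧ b = 0)) := by
    intro e
    by_cases hne : {v : V | e ∈ v.1}.Nonempty
    · have hmem : {v : V | e ∈ v.1} ∈ F := Finset.mem_filter.2
        ⟨Finset.mem_image.2 ⟨e, Finset.mem_univ _, rfl⟩, hne⟩
      obtain ⟨a, b, hab⟩ := hσ _ hmem
      simp only [Set.mem_setOf_eq] at hab
      obtain ⟨v₀, hv₀⟩ := hne
      obtain ⟨i₀, rfl⟩ := σ.surjective v₀
      simp only [Set.mem_setOf_eq] at hv₀
      have h₀ := (hab i₀).1 hv₀
      have hi₀ := i₀.2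
      refine ⟨a, min b n, ?_, Nat.min_le_right _ _, Or.inl (by omega)⟩
      intro i
      rw [hab i]
      have := i.2
      omega
    · refine ⟨0, 0, ?_, by omega, Or.inr ⟨rfl, rfl⟩⟩
      intro i
      constructor
      · intro h; exact absurd ⟨σ i, h⟩ hne
      · omega
  choose aN bN hN using hchoice
  -- the realization data
  set A : α → ℝ := fun e => (aN e : ℝ) - 1/2 with hAdef
  set B : α → ℝ := fun e => (bN e : ℝ) - 1/2 with hBdef
  refine ⟨fun e => ![A e + B e, -1], fun e => -(A e * B e),
    {x : Fin 2 → ℝ | (x 0)^2 < x 1}, ?_, ?_, ?_⟩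
  · exact isOpen_lt ((continuous_apply 0).pow 2) (continuous_apply 1)
  · intro x hx y hy t u ht hu htu
    simp only [Set.mem_setOf_eq] at hx hy ⊢
    have h0 : (t • x + u • y) 0 = t * x 0 + u * y 0 := by simp
    have h1 : (t • x + u • y) 1 = t * x 1 + u * y 1 := by simp
    rw [h0, h1]
    rcases eq_or_lt_of_le ht with hteq | htpos
    · have hu1 : u = 1 := by linarith
      rw [← hteq, hu1]
      simpa using hy
    · nlinarith [mul_le_mul_of_nonneg_left hy.le hu, (mul_lt_mul_iff_right₀ htpos).2 hx,
        mul_nonneg (mul_nonneg htpos.le hu) (sq_nonneg (x 0 - y 0))]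
  · intro X
    have fval : ∀ (e : α) (x : Fin 2 → ℝ),
        (∑ i, ![A e + B e, -1] i * x i) + -(A e * B e)
          = (x 0 - A e) * (B e - x 0) + ((x 0)^2 - x 1) := by
      intro e x
      rw [Fin.sum_univ_two]
      simp only [Matrix.cons_val_zero, Matrix.cons_val_one, Matrix.head_cons]
      ring
    constructor
    · -- forward direction: members of 𝒯 are realized
      intro hX
      set i := σ.symm ⟨X, hX⟩ with hidef
      refine ⟨![(i.1 : ℝ), (i.1 : ℝ)^2 + 1/8], by
        simp only [Set.mem_setOf_eq, Matrix.cons_val_zero, Matrix.cons_val_one,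
          Matrix.head_cons]
        linarith, ?_, ?_⟩
      · intro e he
        rw [fval]
        simp only [Matrix.cons_val_zero, Matrix.cons_val_one, Matrix.head_cons]
        have hmem : e ∈ (σ i).1 := by rw [hidef, Equiv.apply_symm_apply]; exact he
        have hint := ((hN e).1 i).1 hmem
        have hca : (aN e : ℝ) ≤ (i.1 : ℝ) := Nat.cast_le.2 hint.1
        have hcb : (i.1 : ℝ) + 1 ≤ (bN e : ℝ) := by exact_mod_cast hint.2
        simp only [hAdef, hBdef]
        nlinarith
      · intro e he
        rw [fval]
        simp only [Matrix.cons_val_zero, Matrix.cons_val_one, Matrix.head_cons]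
        have hmem : e ∉ (σ i).1 := by rw [hidef, Equiv.apply_symm_apply]; exact he
        have hint : ¬(aN e ≤ i.1 ∧ i.1 < bN e) := fun hc => hmem (((hN e).1 i).2 hc)
        simp only [hAdef, hBdef]
        rcases (hN e).2.2 with hlt | ⟨ha0, hb0⟩
        · rcases Nat.lt_or_ge i.1 (aN e) with hia | hia
          · have h1 : (i.1 : ℝ) + 1 ≤ (aN e : ℝ) := by exact_mod_cast hia
            have h2 : (aN e : ℝ) + 1 ≤ (bN e : ℝ) := by exact_mod_cast hlt
            nlinarith
          · have hib : bN e ≤ i.1 := by omega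
            have h1 : (bN e : ℝ) ≤ (i.1 : ℝ) := Nat.cast_le.2 hib
            have h2 : (aN e : ℝ) + 1 ≤ (bN e : ℝ) := by exact_mod_cast hlt
            nlinarith
        · rw [ha0, hb0]
          push_cast
          nlinarith [sq_nonneg ((i.1 : ℝ) + 1/2)]
    · -- converse direction: every realized pattern is in 𝒯
      rintro ⟨x, hxK, hpos, hneg⟩
      simp only [Set.mem_setOf_eq] at hxK
      set t := x 0 with htdef
      set s := x 1 - t^2 with hsdef
      have hs : 0 < s := by rw [hsdef]; linarith
      have hq : ∀ e ∈ X, s < (t - A e) * (B e - t) := by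
        intro e he
        have h := hpos e he
        rw [fval] at h
        rw [hsdef]
        linarith
      have hq' : ∀ e ∉ X, (t - A e) * (B e - t) < s := by
        intro e he
        have h := hneg e he
        rw [fval] at h
        rw [hsdef]
        linarith
      rcases X.eq_empty_or_nonempty with rfl | hXne
      · exact h0
      obtain ⟨e₀, he₀X, he₀min⟩ := X.exists_min_image (fun e => bN e - aN e) hXne
      have hXint : ∀ e ∈ X, aN e < bN e := by
        intro e he
        rcases (hN e).2.2 with h | ⟨ha, hb⟩
        · exact h
        · exfalso
          have h := hq e he
          simp only [hAdef, hBdef, ha, hb] at h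
          push_cast at h
          nlinarith [sq_nonneg (t + 1/2)]
      have hfac : ∀ e ∈ X, A e < t ∧ t < B e := by
        intro e he
        have hab : A e < B e := by
          have h := hXint e he
          have : (aN e : ℝ) + 1 ≤ (bN e : ℝ) := by exact_mod_cast h
          simp only [hAdef, hBdef]
          linarith
        have hqe := hq e he
        by_contra hcon
        push_neg at hcon
        rcases le_or_gt t (A e) with h | h
        · nlinarith
        · have h2 := hcon h
          nlinarith
      have hnest : ∀ e ∈ X, ∀ f ∈ X,
          (aN f ≤ aN e ∧ bN e ≤ bN f) ∨ (aN e ≤ aN f ∧ bN f ≤ bN e) := by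
        intro e he f hf
        have hee := hXint e he
        have hff := hXint f hf
        have hen := (hN e).2.1
        have hfn := (hN f).2.1
        rcases laminar e f with hsub | hsub | hdis
        · left
          have h1 : aN f ≤ aN e ∧ aN e < bN f := by
            have hm : e ∈ (σ ⟨aN e, by omega⟩).1 := ((hN e).1 _).2 (by simp; omega)
            have := ((hN f).1 ⟨aN e, by omega⟩).1 (hsub hm)
            simpa using this
          have h2 : aN f ≤ bN e - 1 ∧ bN e - 1 < bN f := by
            have hm : e ∈ (σ ⟨bN e - 1, by omega⟩).1 := ((hN e).1 _).2 (by simp; omega)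
            have := ((hN f).1 ⟨bN e - 1, by omega⟩).1 (hsub hm)
            simpa using this
          omega
        · right
          have h1 : aN e ≤ aN f ∧ aN f < bN e := by
            have hm : f ∈ (σ ⟨aN f, by omega⟩).1 := ((hN f).1 _).2 (by simp; omega)
            have := ((hN e).1 ⟨aN f, by omega⟩).1 (hsub hm)
            simpa using this
          have h2 : aN e ≤ bN f - 1 ∧ bN f - 1 < bN e := by
            have hm : f ∈ (σ ⟨bN f - 1, by omega⟩).1 := ((hN f).1 _).2 (by simp; omega)
            have := ((hN e).1 ⟨bN f - 1, by omega⟩).1 (hsub hm)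
            simpa using this
          omega
        · exfalso
          have hfe := hfac e he
          have hff' := hfac f hf
          have hab1 : (aN e : ℝ) < (bN f : ℝ) := by
            simp only [hAdef, hBdef] at hfe hff'
            linarith [hfe.1, hff'.2]
          have hab2 : (aN f : ℝ) < (bN e : ℝ) := by
            simp only [hAdef, hBdef] at hfe hff'
            linarith [hfe.2, hff'.1]
          have h1 : aN e < bN f := by exact_mod_cast hab1
          have h2 : aN f < bN e := by exact_mod_cast hab2
          have hin : max (aN e) (aN f) < n := by omega
          have hme : e ∈ (σ ⟨max (aN e) (aN f), hin⟩).1 :=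
            ((hN e).1 _).2 (by simp; omega)
          have hmf : f ∈ (σ ⟨max (aN e) (aN f), hin⟩).1 :=
            ((hN f).1 _).2 (by simp; omega)
          exact Set.disjoint_left.1 hdis hme hmf
      have hkey : ∀ e ∈ X, aN e ≤ aN e₀ ∧ bN e₀ ≤ bN e := by
        intro e he
        have hm := he₀min e he
        have he' := hXint e he
        have he0' := hXint e₀ he₀X
        rcases hnest e he e₀ he₀X with ⟨h1, h2⟩ | ⟨h1, h2⟩
        · omega
        · omega
      set g : ℕ → Finset α := fun i => if h : i < n then (σ ⟨i, h⟩).1 else ∅ with hgdef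
      have h₀' := hXint e₀ he₀X
      have hbn := (hN e₀).2.1
      have hIco : (Finset.Ico (aN e₀) (bN e₀)).Nonempty := by
        rw [Finset.nonempty_Ico]; exact h₀'
      have hginT : ∀ i ∈ Finset.Ico (aN e₀) (bN e₀), g i ∈ 𝒯 := by
        intro i hi
        rw [Finset.mem_Ico] at hi
        have hin : i < n := by omega
        simp only [hgdef, hin, dif_pos]
        exact (σ ⟨i, hin⟩).2
      have hXeq : X = (Finset.Ico (aN e₀) (bN e₀)).inf g := by
        apply Finset.Subset.antisymm
        · intro e he
          rw [Finset.mem_inf]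
          intro i hi
          rw [Finset.mem_Ico] at hi
          have hin : i < n := by omega
          simp only [hgdef, hin, dif_pos]
          refine ((hN e).1 ⟨i, hin⟩).2 ?_
          have := hkey e he
          simp only []
          omega
        · intro e he
          rw [Finset.mem_inf] at he
          have hin1 : aN e₀ < n := by omega
          have hin2 : bN e₀ - 1 < n := by omega
          have hm1 := he (aN e₀) (by rw [Finset.mem_Ico]; omega)
          have hm2 := he (bN e₀ - 1) (by rw [Finset.mem_Ico]; omega)
          simp only [hgdef, hin1, dif_pos] at hm1
          simp only [hgdef, hin2, dif_pos] at hm2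
          have hc1 := ((hN e).1 ⟨aN e₀, hin1⟩).1 hm1
          have hc2 := ((hN e).1 ⟨bN e₀ - 1, hin2⟩).1 hm2
          simp only [] at hc1 hc2
          by_contra heX
          have hlt := hq' e heX
          have h₀q := hq e₀ he₀X
          have hA' : A e ≤ A e₀ := by
            simp only [hAdef]
            have : (aN e : ℝ) ≤ (aN e₀ : ℝ) := Nat.cast_le.2 hc1.1
            linarith
          have hB' : B e₀ ≤ B e := by
            simp only [hBdef]
            have hble : bN e₀ ≤ bN e := by omega
            have : (bN e₀ : ℝ) ≤ (bN e : ℝ) := Nat.cast_le.2 hble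
            linarith
          have hf₀ := hfac e₀ he₀X
          nlinarith [hf₀.1, hf₀.2]
      rw [hXeq]
      exact finset_inf_mem 𝒯 hinter _ g hIco hginT
end

section
/- Let U be a finite set with |U| = n, let 1 ≤ r ≤ n, and let 𝒮 = {X ⊆ U : |X| ≤ r} be the full simplicial complex U_{r,n} consisting of all subsets of U of size at most r. If 𝒮 is realizable in ℝ^m, then m ≥ min(2r, n − 1). -/
open Finset

lemma aux_sign_contradiction {α : Type*} [Fintype α] [DecidableEq α] {r m : ℕ}
    {a : α → Fin m → ℝ} {b : α → ℝ} {K : Set (Fin m → ℝ)}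
    (hreal : ∀ X : Finset α, X.card ≤ r → ∃ x ∈ K,
      (∀ e ∈ X, 0 < (∑ i, a e i * x i) + b e) ∧
      ∀ e ∉ X, (∑ i, a e i * x i) + b e < 0)
    (lam : α → ℝ) (e0 : α) (he0 : lam e0 ≠ 0)
    (ha : ∀ i, ∑ e, lam e * a e i = 0) (hb : ∑ e, lam e * b e = 0)
    (hcard : (univ.filter fun e => 0 < lam e).card ≤ r) : False := by
  obtain ⟨x, -, hpos, hneg⟩ := hreal _ hcard
  have key : ∀ e : α, 0 ≤ lam e * ((∑ i, a e i * x i) + b e) := by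
    intro e
    rcases lt_trichotomy (lam e) 0 with hlt | heq | hgt
    · have he : e ∉ univ.filter fun e => 0 < lam e := by simp [not_lt.mpr hlt.le]
      exact (mul_pos_of_neg_of_neg hlt (hneg e he)).le
    · simp [heq]
    · have he : e ∈ univ.filter fun e => 0 < lam e := by simp [hgt]
      exact (mul_pos hgt (hpos e he)).le
  have key0 : 0 < lam e0 * ((∑ i, a e0 i * x i) + b e0) := by
    rcases lt_or_gt_of_ne he0 with hlt | hgt
    · have he : e0 ∉ univ.filter fun e => 0 < lam e := by simp [not_lt.mpr hlt.le]
      exact mul_pos_of_neg_of_neg hlt (hneg e0 he)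
    · have he : e0 ∈ univ.filter fun e => 0 < lam e := by simp [hgt]
      exact mul_pos hgt (hpos e0 he)
  have hsum : ∑ e, lam e * ((∑ i, a e i * x i) + b e) = 0 := by
    simp_rw [mul_add, Finset.sum_add_distrib, hb, add_zero, Finset.mul_sum, ← mul_assoc]
    rw [Finset.sum_comm]
    simp_rw [← Finset.sum_mul, ha, zero_mul, Finset.sum_const_zero]
  have hpos' : 0 < ∑ e, lam e * ((∑ i, a e i * x i) + b e) :=
    Finset.sum_pos' (fun e _ => key e) ⟨e0, Finset.mem_univ _, key0⟩
  linarith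

/-- If the full simplicial complex `U_{r,n}` of all subsets of size at most `r` of an
`n`-element set is realizable in `ℝ^m`, then `m ≥ min(2r, n − 1)`. -/
theorem full_simplicial_complex_edim_lower_bound
    {α : Type*} [Fintype α] [DecidableEq α] (r m : ℕ)
    (hr1 : 1 ≤ r) (hrn : r ≤ Fintype.card α)
    (h : IsRealizable {X : Finset α | X.card ≤ r} m) :
    min (2 * r) (Fintype.card α - 1) ≤ m := by
  by_contra hcon
  push_neg at hcon
  rw [lt_min_iff] at hcon
  obtain ⟨hm2r, hmn⟩ := hcon
  have hcardα : 1 ≤ Fintype.card α := le_trans hr1 hrn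
  obtain ⟨a, b, K, -, -, hiff⟩ := h
  have hreal : ∀ X : Finset α, X.card ≤ r → ∃ x ∈ K,
      (∀ e ∈ X, 0 < (∑ i, a e i * x i) + b e) ∧
      ∀ e ∉ X, (∑ i, a e i * x i) + b e < 0 := fun X hX => (hiff X).1 hX
  obtain ⟨S, -, hScard⟩ := Finset.exists_subset_card_eq (s := (univ : Finset α)) (n := m + 2)
    (by rw [Finset.card_univ]; omega)
  set v : α → (Fin (m + 1) → ℝ) := fun e => Fin.snoc (a e) (b e) with hv
  have hdep : ¬ LinearIndependent ℝ (fun e : ↥S => v ↑e) := by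
    intro hli
    have hle := hli.fintype_card_le_finrank
    rw [Fintype.card_coe, hScard] at hle
    simp [Module.finrank_fintype_fun_eq_card] at hle
  obtain ⟨g, hg, i0, hi0⟩ := Fintype.not_linearIndependent_iff.mp hdep
  set lam : α → ℝ := fun e => if he : e ∈ S then g ⟨e, he⟩ else 0 with hlam
  have hlamS : ∀ e ∉ S, lam e = 0 := fun e he => dif_neg he
  have hsumv : ∑ e, lam e • v e = 0 := by
    rw [← Finset.sum_subset (Finset.subset_univ S)
      (fun e _ he => by rw [hlamS e he, zero_smul])]
    rw [← Finset.sum_attach S (fun e => lam e • v e)]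
    rw [← hg]
    apply Finset.sum_congr rfl
    intro e _
    simp [hlam, dif_pos e.2]
  have ha' : ∀ i : Fin m, ∑ e, lam e * a e i = 0 := by
    intro i
    have := congrFun hsumv i.castSucc
    simpa [hv, Fin.snoc_castSucc, Finset.sum_apply] using this
  have hb' : ∑ e, lam e * b e = 0 := by
    have := congrFun hsumv (Fin.last m)
    simpa [hv, Fin.snoc_last, Finset.sum_apply] using this
  have hlam0 : lam ↑i0 ≠ 0 := by
    rw [hlam]; simpa [dif_pos i0.2] using hi0
  set P := univ.filter fun e => 0 < lam e with hP
  set N := univ.filter fun e => lam e < 0 with hN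
  have hPS : P ⊆ S := by
    intro e he
    by_contra heS
    rw [hP, Finset.mem_filter] at he
    rw [hlamS e heS] at he
    exact lt_irrefl 0 he.2
  have hNS : N ⊆ S := by
    intro e he
    by_contra heS
    rw [hN, Finset.mem_filter] at he
    rw [hlamS e heS] at he
    exact lt_irrefl 0 he.2
  have hdisj : Disjoint P N := by
    rw [Finset.disjoint_left]
    intro e heP heN
    rw [hP, Finset.mem_filter] at heP
    rw [hN, Finset.mem_filter] at heN
    exact absurd (heP.2.trans heN.2) (lt_irrefl 0)
  have hPN : P.card + N.card ≤ m + 2 := by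
    rw [← Finset.card_union_of_disjoint hdisj]
    exact le_trans (Finset.card_le_card (Finset.union_subset hPS hNS)) hScard.le
  rcases (show P.card ≤ r ∨ N.card ≤ r by omega) with hc | hc
  · exact aux_sign_contradiction hreal lam ↑i0 hlam0 ha' hb' hc
  · refine aux_sign_contradiction hreal (-lam) ↑i0 (by simpa using hlam0) ?_ ?_ ?_
    · intro i
      have := ha' i
      simp only [Pi.neg_apply, neg_mul, Finset.sum_neg_distrib, neg_eq_zero]
      exact this
    · simp only [Pi.neg_apply, neg_mul, Finset.sum_neg_distrib, neg_eq_zero]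
      exact hb'
    · have : (univ.filter fun e => 0 < (-lam) e) = N := by
        apply Finset.filter_congr
        intro e _
        simp [neg_pos]
      rw [this]; exact hc
end
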